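/- Let R⁺ be a proper and transitive menu-item relation on 𝒜. Then for every finite X ⊆ 𝒜 and y ∈ 𝒜 with X R⁺ y, there exists x ∈ X such that ¬({y} R⁺ x). In particular, it is impossible that {x} R⁺ y and {y} R⁺ x simultaneously. -/
import Mathlib


open Finset

/-- A menu-item relation is proper if `X R x` implies `X ≠ ∅`. -/
def MProper {α : Type*} (R : Finset α → α → Prop) : Prop :=
  ∀ X x, R X x → X ≠ ∅

/-- A menu-item relation is irreflexive if `X R x` implies `x ∉ X`. -/
def MIrrefl {α : Type*} (R : Finset α → α → Prop) : Prop :=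
  ∀ X x, R X x → x ∉ X

/-- Transitivity for menu-item relations. -/
def MTrans {α : Type*} [DecidableEq α] (R : Finset α → α → Prop) : Prop :=
  ∀ X x Y y, R X x → R Y y → x ∈ Y → R ((X ∪ Y) \ {x, y}) y

/-- The transitive closure of a menu-item relation: the smallest transitive
menu-item relation containing it. -/
def MTransClosure {α : Type*} [DecidableEq α] (R : Finset α → α → Prop) :
    Finset α → α → Prop :=
  fun X x => ∀ S : Finset α → α → Prop, MTrans S → (∀ Y y, R Y y → S Y y) → S X x

/-- a proper transitive menu-item relation has no reversal. -/
theorem menuRel_no_reversal {α : Type*} [DecidableEq α]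
    (Rp : Finset α → α → Prop) (hPr : MProper Rp) (hTr : MTrans Rp) :
    (∀ (X : Finset α) (y : α), Rp X y → ∃ x ∈ X, ¬ Rp {y} x) ∧
    (∀ x y : α, Rp {x} y → ¬ Rp {y} x) := by
  have key : ∀ n (X : Finset α) (y : α), X.card = n → Rp X y → ∃ x ∈ X, ¬ Rp {y} x := by
    intro n
    induction n using Nat.strong_induction_on with
    | _ n ih =>
      intro X y hcard hXy
      by_contra h
      push_neg at h
      have hne : X ≠ ∅ := hPr X y hXy
      obtain ⟨x, hx⟩ := Finset.nonempty_iff_ne_empty.mpr hne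
      have h1 : Rp {y} x := h x hx
      have h2 := hTr {y} x X y h1 hXy hx
      set X' := (({y} : Finset α) ∪ X) \ {x, y} with hX'
      have hsub : X' ⊆ X.erase x := by
        intro a ha
        simp only [hX', Finset.mem_sdiff, Finset.mem_union, Finset.mem_insert,
          Finset.mem_singleton, Finset.mem_erase] at ha ⊢
        tauto
      have hlt : X'.card < n := by
        calc X'.card ≤ (X.erase x).card := Finset.card_le_card hsub
          _ < X.card := Finset.card_erase_lt_of_mem hx
          _ = n := hcard
      obtain ⟨x', hx', hnx'⟩ := ih X'.card hlt X' y rfl h2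
      have : x' ∈ X := by
        have := hsub hx'
        exact Finset.mem_of_mem_erase this
      exact hnx' (h x' this)
  refine ⟨fun X y hXy => key X.card X y rfl hXy, fun x y hxy hyx => ?_⟩
  obtain ⟨x', hx', hn⟩ := key 1 {x} y (by simp) hxy
  simp only [Finset.mem_singleton] at hx'
  exact hn (hx' ▸ hyx)
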